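/- Fix h > 0 and F ∈ ℂ with a := Re F > 0. Let u : (0,∞) → ℂ be continuous and square-integrable, and define v(x) = h^{-1}∫ₓ^∞ u(t)·e^{(x−t)·conj(F)/h} dt for x ≥ 0 (the integral converges since |e^{(x−t)conj(F)/h}| = e^{-(t−x)a/h} for t ≥ x). Then: (i) v is continuously differentiable on (0,∞) and satisfies conj(F)·v − h·v′ = u (i.e. v is a right inverse image of u under the adjoint operator J* = conj(F) − h∂_x); (ii) ‖v‖_{L²(0,∞)} ≤ a^{-1}·‖u‖_{L²(0,∞)}; and (iii) ‖h·v′‖_{L²(0,∞)} ≤ (1 + |F|/a)·‖u‖_{L²(0,∞)}. -/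

import Mathlib

open MeasureTheory

open MeasureTheory Set Real Filter

lemma kern_integrable (h q x : ℝ) (hh : 0 < h) (hq : 0 < q) :
    IntegrableOn (fun t : ℝ => h⁻¹ * Real.exp (-q * (t - x))) (Set.Ioi x) := by
  have := ((exp_neg_integrableOn_Ioi x hq).const_mul (Real.exp (q * x))).const_mul h⁻¹
  refine MeasureTheory.IntegrableOn.congr_fun this (fun t _ => ?_) measurableSet_Ioi
  rw [← Real.exp_add]
  ring_nf

lemma kern_int (h q : ℝ) (hh : 0 < h) (hq : 0 < q) (x : ℝ) :
    ∫⁻ t in Set.Ioi x, ENNReal.ofReal (h⁻¹ * Real.exp (-q * (t - x))) =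
      ENNReal.ofReal (h⁻¹ * q⁻¹) := by
  have hint := kern_integrable h q x hh hq
  rw [← ofReal_integral_eq_lintegral_ofReal hint]
  · congr 1
    have hd : ∀ t ∈ Set.Ici x, HasDerivAt (fun t : ℝ => -(h⁻¹ * q⁻¹) * Real.exp (-q * (t - x)))
        (h⁻¹ * Real.exp (-q * (t - x))) t := by
      intro t _
      have h1 : HasDerivAt (fun t : ℝ => -q * (t - x)) (-q) t := by
        simpa using (((hasDerivAt_id t).sub_const x).const_mul (-q))
      have := (h1.exp.const_mul (-(h⁻¹ * q⁻¹)))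
      refine this.congr_deriv ?_
      field_simp
    have htend : Filter.Tendsto (fun t : ℝ => -(h⁻¹ * q⁻¹) * Real.exp (-q * (t - x)))
        Filter.atTop (nhds 0) := by
      rw [show (0:ℝ) = -(h⁻¹ * q⁻¹) * 0 by ring]
      refine Filter.Tendsto.const_mul _ ?_
      have h2 : Tendsto (fun t : ℝ => -q * t) atTop atBot :=
        tendsto_id.const_mul_atTop_of_neg (by linarith)
      have h3 : Tendsto (fun t : ℝ => -q * t + q * x) atTop atBot :=
        tendsto_atBot_add_const_right _ _ h2
      exact Real.tendsto_exp_atBot.comp (h3.congr (fun t => by ring))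
    have := MeasureTheory.integral_Ioi_of_hasDerivAt_of_tendsto' hd hint htend
    rw [this]
    simp [Real.exp_zero]
  · filter_upwards with t
    positivity

lemma kern_int2 (h q : ℝ) (hh : 0 < h) (hq : 0 < q) (t : ℝ) :
    ∫⁻ x in Set.Ioo 0 t, ENNReal.ofReal (h⁻¹ * Real.exp (-q * (t - x))) ≤
      ENNReal.ofReal (h⁻¹ * q⁻¹) := by
  rcases le_or_gt t 0 with ht | ht
  · rw [Set.Ioo_eq_empty (not_lt.2 ht)]
    simp
  · have hcont : Continuous (fun x : ℝ => h⁻¹ * Real.exp (-q * (t - x))) := by continuity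
    have hint : IntegrableOn (fun x : ℝ => h⁻¹ * Real.exp (-q * (t - x))) (Set.Ioc 0 t) :=
      hcont.integrableOn_Ioc
    calc ∫⁻ x in Set.Ioo 0 t, ENNReal.ofReal (h⁻¹ * Real.exp (-q * (t - x)))
        ≤ ∫⁻ x in Set.Ioc 0 t, ENNReal.ofReal (h⁻¹ * Real.exp (-q * (t - x))) :=
          lintegral_mono_set Set.Ioo_subset_Ioc_self
      _ = ENNReal.ofReal (∫ x in Set.Ioc 0 t, h⁻¹ * Real.exp (-q * (t - x))) := by
          rw [← ofReal_integral_eq_lintegral_ofReal hint]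
          filter_upwards with x; positivity
      _ ≤ ENNReal.ofReal (h⁻¹ * q⁻¹) := by
          apply ENNReal.ofReal_le_ofReal
          rw [← intervalIntegral.integral_of_le ht.le]
          have hd : ∀ x ∈ Set.uIcc 0 t, HasDerivAt (fun x : ℝ => (h⁻¹ * q⁻¹) * Real.exp (-q * (t - x)))
              (h⁻¹ * Real.exp (-q * (t - x))) x := by
            intro x _
            have h1 : HasDerivAt (fun x : ℝ => -q * (t - x)) q x := by
              simpa using (((hasDerivAt_id x).const_sub t).const_mul (-q))
            have := (h1.exp.const_mul (h⁻¹ * q⁻¹))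
            refine this.congr_deriv ?_
            field_simp
          have hcont2 : ContinuousOn (fun x : ℝ => h⁻¹ * Real.exp (-q * (t - x))) (Set.uIcc 0 t) :=
            (Continuous.continuousOn (by continuity))
          rw [intervalIntegral.integral_eq_sub_of_hasDerivAt hd
            (hcont2.intervalIntegrable)]
          have e1 : Real.exp (-q * (t - t)) = 1 := by simp
          rw [e1]
          have e2 : Real.exp (-q * (t - 0)) ≥ 0 := (Real.exp_pos _).le
          nlinarith [mul_pos (inv_pos.2 hh) (inv_pos.2 hq)]


/-- **Right inverse of the adjoint `J* = conj(F) − h ∂ₓ` on the half line, fixed frequency.**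
Fix `h > 0`, `F ∈ ℂ` with `a := Re F > 0`. For `u : (0,∞) → ℂ` continuous and square
integrable, define `v x = h⁻¹ ∫ₓ^∞ u t · e^{(x−t)·conj F/h} dt`. Then `v` is `C¹` on `(0,∞)`,
satisfies `conj(F)·v − h·v' = u` there, `‖v‖_{L²} ≤ a⁻¹‖u‖_{L²}`, and
`‖h v'‖_{L²} ≤ (1 + |F|/a)‖u‖_{L²}`. -/
theorem stmt10 (h : ℝ) (hh : 0 < h) (F : ℂ) (ha : 0 < F.re)
    (u : ℝ → ℂ) (hu_cont : ContinuousOn u (Set.Ioi 0))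
    (hu_L2 : MeasureTheory.MemLp u 2 (volume.restrict (Set.Ioi 0)))
    (v : ℝ → ℂ)
    (hv : ∀ x : ℝ, 0 ≤ x → v x =
      (h : ℂ)⁻¹ * ∫ t in Set.Ioi x,
        u t * Complex.exp (((x - t : ℝ) : ℂ) * (starRingEnd ℂ) F / (h : ℂ))) :
    ∃ v' : ℝ → ℂ,
      ContinuousOn v' (Set.Ioi 0) ∧
      (∀ x ∈ Set.Ioi (0:ℝ), HasDerivAt v (v' x) x) ∧
      (∀ x ∈ Set.Ioi (0:ℝ), (starRingEnd ℂ) F * v x - (h : ℂ) * v' x = u x) ∧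
      MeasureTheory.MemLp v 2 (volume.restrict (Set.Ioi 0)) ∧
      eLpNorm v 2 (volume.restrict (Set.Ioi 0)) ≤
        ENNReal.ofReal (F.re)⁻¹ * eLpNorm u 2 (volume.restrict (Set.Ioi 0)) ∧
      eLpNorm (fun x => (h : ℂ) * v' x) 2 (volume.restrict (Set.Ioi 0)) ≤
        ENNReal.ofReal (1 + ‖F‖ / F.re) * eLpNorm u 2 (volume.restrict (Set.Ioi 0)) := by
  have hhC : (h : ℂ) ≠ 0 := by exact_mod_cast hh.ne'
  set q : ℝ := F.re / h with hq_def
  have hq : 0 < q := div_pos ha hh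
  set c : ℂ := (starRingEnd ℂ) F / (h : ℂ) with hc_def
  have hcre : c.re = q := by
    simp [hc_def, hq_def, Complex.div_ofReal_re]
  -- norm of exponential
  have hnorm : ∀ s : ℝ, ‖Complex.exp ((s : ℂ) * c)‖ = Real.exp (q * s) := by
    intro s
    rw [Complex.norm_exp, Complex.re_ofReal_mul, hcre, mul_comm]
  -- the integrand rewrite
  have hexp_eq : ∀ x t : ℝ, Complex.exp (((x - t : ℝ) : ℂ) * (starRingEnd ℂ) F / (h : ℂ)) =
      Complex.exp ((x : ℂ) * c) * Complex.exp ((-t : ℝ) * c) := by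
    intro x t
    rw [← Complex.exp_add]
    congr 1
    push_cast
    ring
  set E : ℝ → ℂ := fun t => Complex.exp ((-t : ℝ) * c) with hE_def
  set w : ℝ → ℂ := fun t => u t * E t with hw_def
  -- integrability of w on (0,∞)
  have hE_cont : Continuous E := by
    apply Complex.continuous_exp.comp
    exact (Complex.continuous_ofReal.comp continuous_neg).mul continuous_const
  have hE2 : MemLp E 2 (volume.restrict (Set.Ioi 0)) := by
    refine (memLp_two_iff_integrable_sq_norm hE_cont.aestronglyMeasurable.restrict).mpr ?_
    have : IntegrableOn (fun t : ℝ => Real.exp (-(2 * q) * t)) (Set.Ioi 0) :=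
      exp_neg_integrableOn_Ioi 0 (by linarith)
    refine MeasureTheory.IntegrableOn.congr_fun this (fun t _ => ?_) measurableSet_Ioi
    rw [hnorm, sq, ← Real.exp_add]
    ring_nf
  have hw_int : IntegrableOn w (Set.Ioi 0) := by
    have h12 : (1:ENNReal)/1 = 1/2 + 1/2 := by
      rw [ENNReal.div_add_div_same, div_one]
      norm_num
      rw [ENNReal.div_self] <;> norm_num
    have := hE2.smul (r := 1) hu_L2
    exact memLp_one_iff_integrable.mp this
  -- v in terms of g
  set g : ℝ → ℂ := fun x => ∫ t in Set.Ioi x, w t with hg_def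
  have hVeq : ∀ x : ℝ, 0 ≤ x → v x = (h : ℂ)⁻¹ * (Complex.exp ((x : ℂ) * c) * g x) := by
    intro x hx
    rw [hv x hx]
    congr 1
    rw [hg_def, ← integral_const_mul]
    apply setIntegral_congr_fun measurableSet_Ioi
    intro t _
    simp only [hexp_eq, hw_def, hE_def]
    ring
  -- derivative of g
  have hw_cont : ContinuousOn w (Set.Ioi 0) := hu_cont.mul hE_cont.continuousOn
  have hgderiv : ∀ x ∈ Set.Ioi (0:ℝ), HasDerivAt g (-w x) x := by
    intro x hx
    have hx0 : (0:ℝ) < x := hx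
    -- g y = g 0 - ∫ t in 0..y, w t  for y ≥ 0
    have hsplit : ∀ y : ℝ, 0 ≤ y → g y = g 0 - ∫ t in (0:ℝ)..y, w t := by
      intro y hy
      have hunion : Set.Ioc 0 y ∪ Set.Ioi y = Set.Ioi 0 := Set.Ioc_union_Ioi_eq_Ioi hy
      have hdisj : Disjoint (Set.Ioc 0 y) (Set.Ioi y) := by
        apply Set.disjoint_left.mpr
        intro t htm htm'
        exact absurd htm.2 (not_le.2 htm')
      have h1 : IntegrableOn w (Set.Ioc 0 y) := hw_int.mono_set (by rw [← hunion]; exact Set.subset_union_left)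
      have h2 : IntegrableOn w (Set.Ioi y) := hw_int.mono_set (by rw [← hunion]; exact Set.subset_union_right)
      have := MeasureTheory.setIntegral_union hdisj measurableSet_Ioi h1 h2
      rw [hunion] at this
      rw [intervalIntegral.integral_of_le hy]
      rw [hg_def]
      simp only at this ⊢
      rw [this]
      ring
    have hderiv0 : HasDerivAt (fun y => ∫ t in (0:ℝ)..y, w t) (w x) x := by
      apply intervalIntegral.integral_hasDerivAt_right
      · rw [intervalIntegrable_iff_integrableOn_Ioc_of_le hx0.le]
        exact hw_int.mono_set Set.Ioc_subset_Ioi_self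
      · exact hw_cont.stronglyMeasurableAtFilter isOpen_Ioi x hx
      · exact (hw_cont x hx).continuousAt (Ioi_mem_nhds hx0)
    have : HasDerivAt (fun y => g 0 - ∫ t in (0:ℝ)..y, w t) (-w x) x := by
      simpa using (hderiv0.const_sub (g 0))
    refine this.congr_of_eventuallyEq ?_
    filter_upwards [Ioi_mem_nhds hx0] with y hy
    exact hsplit y (le_of_lt hy)
  -- the derivative of v
  have hvd : ∀ x ∈ Set.Ioi (0:ℝ), HasDerivAt v (c * v x - (h : ℂ)⁻¹ * u x) x := by
    intro x hx
    have hx0 : (0:ℝ) < x := hx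
    have hec : HasDerivAt (fun y : ℝ => Complex.exp ((y : ℂ) * c)) (c * Complex.exp ((x : ℂ) * c)) x := by
      have h1 : HasDerivAt (fun y : ℝ => (y : ℂ) * c) c x := by
        simpa using (Complex.ofRealCLM.hasDerivAt.mul_const c)
      simpa [mul_comm] using h1.cexp
    have hV : HasDerivAt (fun y : ℝ => (h : ℂ)⁻¹ * (Complex.exp ((y : ℂ) * c) * g y))
        ((h : ℂ)⁻¹ * (c * Complex.exp ((x : ℂ) * c) * g x + Complex.exp ((x : ℂ) * c) * (-w x))) x :=
      ((hec.mul (hgderiv x hx))).const_mul _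
    have hEuw : Complex.exp ((x : ℂ) * c) * w x = u x := by
      rw [hw_def]
      simp only
      rw [hE_def]
      simp only
      rw [show u x * Complex.exp ((-x : ℝ) * c) = u x * Complex.exp (((-x : ℝ)) * c) from rfl]
      rw [mul_comm (u x) _, ← mul_assoc, ← Complex.exp_add]
      push_cast
      rw [show (x : ℂ) * c + -(x:ℂ) * c = 0 by ring, Complex.exp_zero, one_mul]
    have hVx : HasDerivAt v (c * v x - (h : ℂ)⁻¹ * u x) x := by
      have heq : (h : ℂ)⁻¹ * (c * Complex.exp ((x : ℂ) * c) * g x + Complex.exp ((x : ℂ) * c) * (-w x))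
          = c * v x - (h : ℂ)⁻¹ * u x := by
        rw [hVeq x hx0.le, ← hEuw]
        ring
      rw [← heq]
      refine hV.congr_of_eventuallyEq ?_
      filter_upwards [Ioi_mem_nhds hx0] with y hy
      exact hVeq y (le_of_lt hy)
    exact hVx
  have hhc : (h : ℂ) * c = (starRingEnd ℂ) F := by
    rw [hc_def]
    field_simp
  have hv_cont : ContinuousOn v (Set.Ioi 0) :=
    fun x hx => ((hvd x hx).continuousAt).continuousWithinAt
  -- measurable representative of u on (0,∞)
  have hW : AEStronglyMeasurable ((Set.Ioi (0:ℝ)).indicator u) volume :=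
    (aestronglyMeasurable_indicator_iff measurableSet_Ioi).mpr hu_L2.1
  set ψ : ℝ → ℂ := hW.mk _ with hψ_def
  have hψ_meas : StronglyMeasurable ψ := hW.stronglyMeasurable_mk
  have huψ : ∀ᵐ t ∂(volume.restrict (Set.Ioi (0:ℝ))), u t = ψ t := by
    have h1 : (Set.Ioi (0:ℝ)).indicator u =ᵐ[volume.restrict (Set.Ioi 0)] u :=
      indicator_ae_eq_restrict measurableSet_Ioi
    exact h1.symm.trans (ae_restrict_of_ae hW.ae_eq_mk)
  set φ : ℝ → ENNReal := fun t => (‖ψ t‖₊ : ENNReal) with hφ_def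
  have hφ_meas : Measurable φ := hψ_meas.measurable.nnnorm.coe_nnreal_ennreal
  set k : ℝ → ENNReal := fun s => ENNReal.ofReal (h⁻¹ * Real.exp (-q * s)) with hk_def
  have hk_cont : Continuous fun s : ℝ => h⁻¹ * Real.exp (-q * s) := by continuity
  have hk_meas : Measurable k := hk_cont.measurable.ennreal_ofReal
  have hk_ne_zero : ∀ s, k s ≠ 0 := by
    intro s
    rw [hk_def]
    simp only [ne_eq, ENNReal.ofReal_eq_zero, not_le]
    positivity
  have hk_ne_top : ∀ s, k s ≠ ⊤ := fun s => ENNReal.ofReal_ne_top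
  have hinva : h⁻¹ * q⁻¹ = (F.re)⁻¹ := by
    rw [hq_def]
    field_simp
  set A : ENNReal := ENNReal.ofReal (F.re)⁻¹ with hA_def
  have hA_ne_top : A ≠ ⊤ := ENNReal.ofReal_ne_top
  have hA_ne_zero : A ≠ 0 := by
    rw [hA_def]
    simp only [ne_eq, ENNReal.ofReal_eq_zero, not_le]
    positivity
  -- pointwise bound
  have hpoint : ∀ x ∈ Set.Ioi (0:ℝ), (‖v x‖₊ : ENNReal) ≤
      ∫⁻ t in Set.Ioi x, k (t - x) * φ t := by
    intro x hx
    have hx0 : (0:ℝ) < x := hx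
    have h1 : (‖v x‖₊ : ENNReal) ≤ ENNReal.ofReal h⁻¹ *
        ∫⁻ t in Set.Ioi x, (‖u t * Complex.exp (((x - t : ℝ) : ℂ) * (starRingEnd ℂ) F / (h : ℂ))‖₊ : ENNReal) := by
      rw [hv x hx0.le]
      rw [← enorm_eq_nnnorm, ← ofReal_norm, norm_mul]
      have : ‖((h:ℂ))⁻¹‖ = h⁻¹ := by
        rw [norm_inv, Complex.norm_real, Real.norm_of_nonneg hh.le]
      rw [this, ENNReal.ofReal_mul (by positivity)]
      exact mul_le_mul_right (by
        rw [ofReal_norm]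
        exact enorm_integral_le_lintegral_enorm _) _
    refine h1.trans ?_
    rw [← lintegral_const_mul' _ _ ENNReal.ofReal_ne_top]
    refine le_of_eq (lintegral_congr_ae ?_)
    have huψ' : ∀ᵐ t ∂(volume.restrict (Set.Ioi x)), u t = ψ t :=
      ae_restrict_of_ae_restrict_of_subset (Set.Ioi_subset_Ioi hx0.le) huψ
    filter_upwards [huψ', ae_restrict_mem measurableSet_Ioi] with t htψ ht
    rw [← enorm_eq_nnnorm, ← ofReal_norm, norm_mul]
    have hnorm' : ‖Complex.exp (((x - t : ℝ) : ℂ) * (starRingEnd ℂ) F / (h : ℂ))‖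
        = Real.exp (q * (x - t)) := by
      rw [mul_div_assoc, ← hc_def]
      exact hnorm (x - t)
    rw [hnorm', ENNReal.ofReal_mul (norm_nonneg _), hk_def]
    simp only
    rw [show -q * (t - x) = q * (x - t) by ring, ENNReal.ofReal_mul (by positivity),
      ofReal_norm, enorm_eq_nnnorm, htψ]
    ring
  -- Cauchy-Schwarz
  have hcs : ∀ x ∈ Set.Ioi (0:ℝ), (‖v x‖₊ : ENNReal) ^ (2:ℝ) ≤
      A * ∫⁻ t in Set.Ioi x, k (t - x) * φ t ^ (2:ℝ) := by
    intro x hx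
    have hconj : Real.HolderConjugate 2 2 := Real.HolderConjugate.two_two
    have hfmeas : Measurable fun t : ℝ => (k (t - x)) ^ ((1:ℝ)/2) :=
      (ENNReal.continuous_rpow_const.measurable).comp (hk_meas.comp (measurable_id.sub_const x))
    have hgmeas : Measurable fun t : ℝ => (k (t - x)) ^ ((1:ℝ)/2) * φ t :=
      hfmeas.mul hφ_meas
    have hCS := ENNReal.lintegral_mul_le_Lp_mul_Lq (volume.restrict (Set.Ioi x)) hconj
      hfmeas.aemeasurable hgmeas.aemeasurable
    have hprod : ∀ t : ℝ, ((fun t => (k (t - x)) ^ ((1:ℝ)/2)) * fun t => (k (t - x)) ^ ((1:ℝ)/2) * φ t) t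
        = k (t - x) * φ t := by
      intro t
      simp only [Pi.mul_apply]
      rw [← mul_assoc, ← ENNReal.rpow_add _ _ (hk_ne_zero _) (hk_ne_top _)]
      norm_num
    have hf2 : ∀ t : ℝ, ((k (t - x)) ^ ((1:ℝ)/2)) ^ (2:ℝ) = k (t - x) := by
      intro t
      rw [← ENNReal.rpow_mul]
      norm_num
    have hg2 : ∀ t : ℝ, ((k (t - x)) ^ ((1:ℝ)/2) * φ t) ^ (2:ℝ) = k (t - x) * φ t ^ (2:ℝ) := by
      intro t
      rw [ENNReal.mul_rpow_of_nonneg _ _ (by norm_num), hf2]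
    rw [lintegral_congr hprod] at hCS
    simp only [hf2, hg2] at hCS
    have hk_eq : ∫⁻ t in Set.Ioi x, k (t - x) = A := by
      rw [hk_def, hA_def, ← hinva]
      exact kern_int h q hh hq x
    rw [hk_eq] at hCS
    calc (‖v x‖₊ : ENNReal) ^ (2:ℝ)
        ≤ (A ^ ((1:ℝ)/2) * (∫⁻ t in Set.Ioi x, k (t - x) * φ t ^ (2:ℝ)) ^ ((1:ℝ)/2)) ^ (2:ℝ) :=
          ENNReal.rpow_le_rpow ((hpoint x hx).trans hCS) (by norm_num)
      _ = A * ∫⁻ t in Set.Ioi x, k (t - x) * φ t ^ (2:ℝ) := by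
          rw [ENNReal.mul_rpow_of_nonneg _ _ (by norm_num : (0:ℝ) ≤ 2),
            ← ENNReal.rpow_mul, ← ENNReal.rpow_mul]
          norm_num
  -- Tonelli
  set S : Set (ℝ × ℝ) := {p : ℝ × ℝ | 0 < p.1 ∧ p.1 < p.2} with hS_def
  have hS_meas : MeasurableSet S :=
    (measurableSet_lt measurable_const measurable_fst).inter
      (measurableSet_lt measurable_fst measurable_snd)
  set H : ℝ × ℝ → ENNReal := S.indicator (fun p => k (p.2 - p.1) * φ p.2 ^ (2:ℝ)) with hH_def
  have hH_meas : Measurable H := by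
    refine Measurable.indicator ?_ hS_meas
    exact (hk_meas.comp (measurable_snd.sub measurable_fst)).mul
      ((ENNReal.continuous_rpow_const.measurable).comp (hφ_meas.comp measurable_snd))
  have hKey1 : ∀ x : ℝ, ∫⁻ t, H (x, t) =
      (Set.Ioi (0:ℝ)).indicator (fun x => ∫⁻ t in Set.Ioi x, k (t - x) * φ t ^ (2:ℝ)) x := by
    intro x
    rcases le_or_gt x 0 with hx | hx
    · rw [Set.indicator_of_notMem (by simpa using hx)]
      rw [← lintegral_zero]
      congr 1
      funext t
      rw [hH_def, Set.indicator_of_notMem]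
      rw [hS_def]
      simp only [Set.mem_setOf_eq, not_and]
      intro h0x
      exact absurd h0x (not_lt.2 hx)
    · rw [Set.indicator_of_mem (by simpa using hx)]
      rw [← lintegral_indicator measurableSet_Ioi _]
      congr 1
      funext t
      rcases lt_or_ge x t with hxt | hxt
      · rw [hH_def, Set.indicator_of_mem (by exact ⟨hx, hxt⟩),
          Set.indicator_of_mem (by exact hxt)]
      · rw [hH_def, Set.indicator_of_notMem (by
            rw [hS_def]; simp only [Set.mem_setOf_eq, not_and]; intro _; exact not_lt.2 hxt),
          Set.indicator_of_notMem (by simpa using hxt)]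
  have hKey2 : ∀ t : ℝ, ∫⁻ x, H (x, t) ≤
      A * (Set.Ioi (0:ℝ)).indicator (fun t => φ t ^ (2:ℝ)) t := by
    intro t
    have hHt : ∀ x : ℝ, H (x, t) = (Set.Ioo (0:ℝ) t).indicator (fun x => k (t - x) * φ t ^ (2:ℝ)) x := by
      intro x
      rcases Classical.em (x ∈ Set.Ioo (0:ℝ) t) with hm | hm
      · rw [Set.indicator_of_mem hm, hH_def, Set.indicator_of_mem (by exact ⟨hm.1, hm.2⟩)]
      · rw [Set.indicator_of_notMem hm, hH_def, Set.indicator_of_notMem (by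
          rw [hS_def]
          simp only [Set.mem_setOf_eq, not_and]
          intro h1 h2
          exact hm ⟨h1, h2⟩)]
    simp only [hHt]
    rw [lintegral_indicator measurableSet_Ioo _]
    have hφt_ne_top : φ t ^ (2:ℝ) ≠ ⊤ :=
      ENNReal.rpow_ne_top_of_nonneg (by norm_num) ENNReal.coe_ne_top
    rw [lintegral_mul_const' _ _ hφt_ne_top]
    rcases le_or_gt t 0 with ht | ht
    · rw [Set.Ioo_eq_empty (not_lt.2 ht)]
      simp
    · rw [Set.indicator_of_mem (by simpa using ht)]
      refine mul_le_mul_left ?_ _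
      rw [hk_def, hA_def, ← hinva]
      exact kern_int2 h q hh hq t
  -- the main L² bound on the lintegral level
  have hmain : ∫⁻ x in Set.Ioi (0:ℝ), (‖v x‖₊ : ENNReal) ^ (2:ℝ) ≤
      A * (A * ∫⁻ t in Set.Ioi (0:ℝ), φ t ^ (2:ℝ)) := by
    calc ∫⁻ x in Set.Ioi (0:ℝ), (‖v x‖₊ : ENNReal) ^ (2:ℝ)
        ≤ ∫⁻ x in Set.Ioi (0:ℝ), A * ∫⁻ t in Set.Ioi x, k (t - x) * φ t ^ (2:ℝ) := by
          refine lintegral_mono_ae ?_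
          filter_upwards [ae_restrict_mem measurableSet_Ioi] with x hx
          exact hcs x hx
      _ = A * ∫⁻ x in Set.Ioi (0:ℝ), ∫⁻ t in Set.Ioi x, k (t - x) * φ t ^ (2:ℝ) :=
          lintegral_const_mul' _ _ hA_ne_top
      _ = A * ∫⁻ x, ∫⁻ t, H (x, t) := by
          congr 1
          rw [← lintegral_indicator measurableSet_Ioi _]
          refine lintegral_congr fun x => ?_
          rw [hKey1 x]
      _ = A * ∫⁻ t, ∫⁻ x, H (x, t) := by
          congr 1
          exact lintegral_lintegral_swap (hH_meas.aemeasurable)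
      _ ≤ A * ∫⁻ t, A * (Set.Ioi (0:ℝ)).indicator (fun t => φ t ^ (2:ℝ)) t :=
          mul_le_mul_right (lintegral_mono fun t => hKey2 t) _
      _ = A * (A * ∫⁻ t in Set.Ioi (0:ℝ), φ t ^ (2:ℝ)) := by
          rw [lintegral_const_mul' _ _ hA_ne_top, lintegral_indicator measurableSet_Ioi _]
  -- identify ∫ φ² with the L² norm of u
  have hφu : ∫⁻ t in Set.Ioi (0:ℝ), φ t ^ (2:ℝ) =
      ∫⁻ t in Set.Ioi (0:ℝ), (‖u t‖₊ : ENNReal) ^ (2:ℝ) := by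
    refine lintegral_congr_ae ?_
    filter_upwards [huψ] with t ht
    rw [hφ_def, ht]
  have hLp : ∀ f : ℝ → ℂ, eLpNorm f 2 (volume.restrict (Set.Ioi (0:ℝ))) =
      (∫⁻ t in Set.Ioi (0:ℝ), (‖f t‖₊ : ENNReal) ^ (2:ℝ)) ^ ((1:ℝ)/2) := by
    intro f
    rw [eLpNorm_eq_lintegral_rpow_enorm_toReal (by norm_num) (by norm_num)]
    norm_num
    rfl
  have hvnorm : eLpNorm v 2 (volume.restrict (Set.Ioi (0:ℝ))) ≤
      A * eLpNorm u 2 (volume.restrict (Set.Ioi (0:ℝ))) := by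
    rw [hLp v, hLp u]
    calc (∫⁻ t in Set.Ioi (0:ℝ), (‖v t‖₊ : ENNReal) ^ (2:ℝ)) ^ ((1:ℝ)/2)
        ≤ (A * (A * ∫⁻ t in Set.Ioi (0:ℝ), (‖u t‖₊ : ENNReal) ^ (2:ℝ))) ^ ((1:ℝ)/2) := by
          refine ENNReal.rpow_le_rpow ?_ (by norm_num)
          rw [← hφu]
          exact hmain
      _ = A * (∫⁻ t in Set.Ioi (0:ℝ), (‖u t‖₊ : ENNReal) ^ (2:ℝ)) ^ ((1:ℝ)/2) := by
          rw [← mul_assoc, ENNReal.mul_rpow_of_nonneg _ _ (by norm_num : (0:ℝ) ≤ 1/2)]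
          congr 1
          rw [show A * A = A ^ (2:ℝ) by rw [ENNReal.rpow_two, sq], ← ENNReal.rpow_mul]
          norm_num
  have hv_meas : AEStronglyMeasurable v (volume.restrict (Set.Ioi (0:ℝ))) :=
    hv_cont.aestronglyMeasurable measurableSet_Ioi
  have hv_L2 : MemLp v 2 (volume.restrict (Set.Ioi (0:ℝ))) := by
    refine ⟨hv_meas, ?_⟩
    refine lt_of_le_of_lt hvnorm ?_
    exact ENNReal.mul_lt_top ENNReal.ofReal_lt_top hu_L2.2
  refine ⟨fun x => c * v x - (h : ℂ)⁻¹ * u x, ?_, hvd, ?_, hv_L2, hvnorm, ?_⟩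
  · exact (continuousOn_const.mul hv_cont).sub (continuousOn_const.mul hu_cont)
  · intro x hx
    calc (starRingEnd ℂ) F * v x - (h : ℂ) * (c * v x - (h : ℂ)⁻¹ * u x)
        = ((starRingEnd ℂ) F - (h:ℂ) * c) * v x + ((h:ℂ) * (h:ℂ)⁻¹) * u x := by ring
      _ = u x := by rw [hhc, mul_inv_cancel₀ hhC]; ring
  · -- the bound on h v'
    have hcongr : (fun x => (h : ℂ) * (c * v x - (h : ℂ)⁻¹ * u x))
        =ᵐ[volume.restrict (Set.Ioi (0:ℝ))] fun x => (starRingEnd ℂ) F * v x - u x := by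
      filter_upwards with x
      rw [mul_sub, ← mul_assoc, hhc, ← mul_assoc, mul_inv_cancel₀ hhC, one_mul]
    rw [eLpNorm_congr_ae hcongr]
    have hsub := eLpNorm_sub_le (μ := volume.restrict (Set.Ioi (0:ℝ))) (p := 2)
      (hv_meas.const_mul ((starRingEnd ℂ) F)) hu_L2.1 one_le_two
    refine hsub.trans ?_
    have hsmul : eLpNorm (fun x => (starRingEnd ℂ) F * v x) 2 (volume.restrict (Set.Ioi (0:ℝ)))
        = (‖F‖₊ : ENNReal) * eLpNorm v 2 (volume.restrict (Set.Ioi (0:ℝ))) := by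
      have := eLpNorm_const_smul ((starRingEnd ℂ) F) v 2 (μ := volume.restrict (Set.Ioi (0:ℝ)))
      rw [show (fun x => (starRingEnd ℂ) F * v x) = (starRingEnd ℂ) F • v from rfl, this]
      congr 1
      simp [RCLike.nnnorm_conj, enorm_eq_nnnorm]
    rw [hsmul]
    set N := eLpNorm u 2 (volume.restrict (Set.Ioi (0:ℝ)))
    calc (‖F‖₊ : ENNReal) * eLpNorm v 2 (volume.restrict (Set.Ioi (0:ℝ))) + N
        ≤ (‖F‖₊ : ENNReal) * (A * N) + N :=
          add_le_add_left (mul_le_mul_right hvnorm _) N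
      _ = ENNReal.ofReal (1 + ‖F‖ / F.re) * N := by
          rw [ENNReal.ofReal_add (by norm_num) (by positivity), ENNReal.ofReal_one,
            div_eq_mul_inv, ENNReal.ofReal_mul (norm_nonneg F), add_mul, one_mul,
            ← enorm_eq_nnnorm, ← ofReal_norm, hA_def, mul_assoc]
          ring
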